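/- Let (Xᵢ, Yᵢ, Rᵢ)_{i≥1} be i.i.d. copies of (X, Y, R), with Y taking values in a finite label set C and R in {0,1}, satisfying: R is conditionally independent of X given Y, and E[R | Y] = φ(Y) almost surely where φ : C → ℝ with c ≤ φ(k) ≤ 1 for some c > 0 and all k. Let ℓ_ℓ and ℓ_u be bounded measurable losses, |ℓ_ℓ(X,Y)| ≤ L and |ℓ_u(X)| ≤ L, and λ ∈ ℝ. Let (φ̂ⁿ)_{n≥1} be any sequence of C-indexed random vectors with φ̂ⁿ(k) → φ(k) in probability for every k ∈ C and φ̂ⁿ(k) ≥ c for all k, n. Then the plug-in debiased SSL empirical risk (1/n) Σ_{i=1}^n [ Rᵢ ℓ_ℓ(Xᵢ, Yᵢ) / φ̂ⁿ(Yᵢ) − λ (Rᵢ − φ̂ⁿ(Yᵢ)) ℓ_u(Xᵢ) / φ̂ⁿ(Yᵢ) ] converges in probability to the theoretical risk E[ℓ_ℓ(X,Y)] as n → ∞. -/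

import Mathlib

open MeasureTheory ProbabilityTheory Filter

open Topology

private lemma tim_add_zero {Ω : Type*} [MeasurableSpace Ω] {μ : Measure Ω}
    {f g : ℕ → Ω → ℝ} {F : Ω → ℝ}
    (hf : TendstoInMeasure μ f atTop F)
    (hg : TendstoInMeasure μ g atTop (fun _ => (0:ℝ))) :
    TendstoInMeasure μ (fun n ω => f n ω + g n ω) atTop F := by
  rw [tendstoInMeasure_iff_dist] at hf hg ⊢
  intro ε hε
  have hsub : ∀ n, {x | ε ≤ dist (f n x + g n x) (F x)} ⊆
      {x | ε/2 ≤ dist (f n x) (F x)} ∪ {x | ε/2 ≤ dist (g n x) ((fun _ => (0:ℝ)) x)} := by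
    intro n x hx
    by_contra hc
    simp only [Set.mem_union, Set.mem_setOf_eq, not_or, not_le] at hc
    simp only [Set.mem_setOf_eq] at hx
    have hkey : dist (f n x + g n x) (F x) ≤ dist (f n x) (F x) + dist (g n x) 0 := by
      simp only [Real.dist_eq, sub_zero]
      calc |f n x + g n x - F x| = |(f n x - F x) + g n x| := by ring_nf
        _ ≤ |f n x - F x| + |g n x| := abs_add_le _ _
    simp only [Real.dist_eq, sub_zero] at hc hkey hx
    linarith [hc.1, hc.2]
  have hb : ∀ n, μ {x | ε ≤ dist (f n x + g n x) (F x)} ≤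
      μ {x | ε/2 ≤ dist (f n x) (F x)} + μ {x | ε/2 ≤ dist (g n x) ((fun _ => (0:ℝ)) x)} :=
    fun n => (measure_mono (hsub n)).trans (measure_union_le _ _)
  have h2 : Tendsto (fun n => μ {x | ε/2 ≤ dist (f n x) (F x)} +
      μ {x | ε/2 ≤ dist (g n x) ((fun _ => (0:ℝ)) x)}) atTop (𝓝 0) := by
    have := (hf (ε/2) (by linarith)).add (hg (ε/2) (by linarith))
    simpa using this
  exact tendsto_of_tendsto_of_tendsto_of_le_of_le tendsto_const_nhds h2 (fun n => zero_le) hb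

private lemma tim_zero_of_bound {Ω C : Type*} [MeasurableSpace Ω] [Fintype C] {μ : Measure Ω}
    (D : ℕ → Ω → ℝ) (p : ℕ → C → Ω → ℝ) (q : C → ℝ) (K : ℝ) (hK : 0 ≤ K)
    (hbound : ∀ n ω, |D n ω| ≤ K * ∑ k, |p n k ω - q k|)
    (hp : ∀ k, TendstoInMeasure μ (fun n => p n k) atTop (fun _ => q k)) :
    TendstoInMeasure μ D atTop (fun _ => (0:ℝ)) := by
  simp only [tendstoInMeasure_iff_dist] at hp ⊢
  intro ε hε
  set N : ℝ := (Fintype.card C : ℝ) with hNdef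
  have hN : 0 ≤ N := Nat.cast_nonneg _
  set δ : ℝ := ε / ((K+1)*(N+1)) with hδdef
  have hδ : 0 < δ := div_pos hε (by nlinarith)
  have hsub : ∀ n, {x | ε ≤ dist (D n x) ((fun _ => (0:ℝ)) x)} ⊆
      ⋃ k ∈ (Finset.univ : Finset C), {x | δ ≤ dist (p n k x) (q k)} := by
    intro n x hx
    simp only [Set.mem_setOf_eq, Real.dist_eq, sub_zero] at hx
    by_contra hc
    simp only [Set.mem_iUnion, Finset.mem_univ, Set.mem_setOf_eq, not_exists, not_le,
      exists_prop, true_and, Real.dist_eq] at hc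
    have hsum : ∑ k, |p n k x - q k| ≤ N * δ := by
      calc ∑ k, |p n k x - q k| ≤ ∑ _k : C, δ :=
            Finset.sum_le_sum (fun k _ => le_of_lt (hc k))
        _ = N * δ := by simp [hNdef, mul_comm]
    have h1 : |D n x| ≤ K * (N * δ) :=
      (hbound n x).trans (by nlinarith)
    have hmul : (K+1)*(N+1)*δ = ε := by
      rw [hδdef]; field_simp
    have h2 : K * (N * δ) < ε := by nlinarith
    linarith
  have hb : ∀ n, μ {x | ε ≤ dist (D n x) ((fun _ => (0:ℝ)) x)} ≤
      ∑ k : C, μ {x | δ ≤ dist (p n k x) (q k)} :=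
    fun n => (measure_mono (hsub n)).trans (measure_biUnion_finset_le _ _)
  have h2 : Tendsto (fun n => ∑ k : C, μ {x | δ ≤ dist (p n k x) (q k)}) atTop (𝓝 0) := by
    have := tendsto_finset_sum (Finset.univ : Finset C) (fun k _ => hp k δ hδ)
    simpa using this
  exact tendsto_of_tendsto_of_tendsto_of_le_of_le tendsto_const_nhds h2 (fun n => zero_le) hb

private lemma key_identity {Ω 𝒳 C : Type*} [MeasurableSpace Ω] [StandardBorelSpace Ω]
    [MeasurableSpace 𝒳] [MeasurableSpace C] [MeasurableSingletonClass C]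
    (μ : Measure Ω) [IsProbabilityMeasure μ]
    (X : Ω → 𝒳) (Y : Ω → C) (R : Ω → ℝ)
    (hX : Measurable X) (hY : Measurable Y) (hR : Measurable R)
    (hRb : ∀ ω, |R ω| ≤ 1)
    (hCI : CondIndepFun (MeasurableSpace.comap Y inferInstance) hY.comap_le R X μ)
    (φ : C → ℝ)
    (hmech : μ[R | MeasurableSpace.comap Y inferInstance] =ᵐ[μ] fun ω => φ (Y ω))
    (k : C) (g : 𝒳 → ℝ) (hg : Measurable g) :
    ∫ ω in Y ⁻¹' {k}, R ω * g (X ω) ∂μ = φ k * ∫ ω in Y ⁻¹' {k}, g (X ω) ∂μ := by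
  classical
  set Ek : Set Ω := Y ⁻¹' {k} with hEkdef
  have hEk : MeasurableSet Ek := hY (measurableSet_singleton k)
  have hEkm : MeasurableSet[MeasurableSpace.comap Y inferInstance] Ek :=
    ⟨{k}, measurableSet_singleton k, rfl⟩
  by_cases hk : μ Ek = 0
  · have hr : μ.restrict Ek = 0 := Measure.restrict_eq_zero.mpr hk
    rw [show (∫ ω in Ek, R ω * g (X ω) ∂μ) = ∫ ω, R ω * g (X ω) ∂(μ.restrict Ek) from rfl,
      show (∫ ω in Ek, g (X ω) ∂μ) = ∫ ω, g (X ω) ∂(μ.restrict Ek) from rfl, hr]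
    simp
  · have hT : (μ Ek).toReal ≠ 0 := by
      rw [ENNReal.toReal_ne_zero]; exact ⟨hk, measure_ne_top μ Ek⟩
    set T : ℝ := (μ Ek).toReal with hTdef
    obtain ⟨ω₁, hω₁⟩ : Ek.Nonempty := nonempty_of_measure_ne_zero hk
    -- constancy of comap-measurable functions on fibers
    have fconst : ∀ u : Ω → ℝ, Measurable[MeasurableSpace.comap Y inferInstance] u →
        ∀ ωa ωb, Y ωa = Y ωb → u ωa = u ωb := by
      intro u hu ωa ωb hYab
      obtain ⟨S, -, hS⟩ := hu (measurableSet_singleton (u ωa))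
      have h1 : ωa ∈ Y ⁻¹' S := by rw [hS]; exact rfl
      have h2 : ωb ∈ Y ⁻¹' S := by
        simp only [Set.mem_preimage] at h1 ⊢; rwa [← hYab]
      rw [hS] at h2
      exact (h2 : u ωb ∈ ({u ωa} : Set ℝ)).symm
    have hval : ∀ u : Ω → ℝ, Measurable[MeasurableSpace.comap Y inferInstance] u →
        Set.EqOn u (fun _ => u ω₁) Ek := by
      intro u hu ω hω
      exact fconst u hu ω ω₁ (by rw [show Y ω = k from hω, show Y ω₁ = k from hω₁])
    -- set-integrals of conditional expectations of indicators
    have hindint : ∀ S : Set Ω, MeasurableSet S →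
        ∫ x in Ek, (μ⟦S | MeasurableSpace.comap Y inferInstance⟧) x ∂μ
          = (μ (S ∩ Ek)).toReal := by
      intro S hS
      rw [setIntegral_condExp hY.comap_le ((integrable_const (1:ℝ)).indicator hS) hEkm,
        setIntegral_indicator hS, setIntegral_const]
      simp [Set.inter_comm]
      rfl
    have hcondconst : ∀ S : Set Ω, MeasurableSet S →
        (μ⟦S | MeasurableSpace.comap Y inferInstance⟧) ω₁ * T = (μ (S ∩ Ek)).toReal := by
      intro S hS
      have h := hindint S hS
      rwa [setIntegral_congr_fun hEk (hval _ stronglyMeasurable_condExp.measurable),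
        setIntegral_const, smul_eq_mul, mul_comm] at h
    -- independence under the conditional measure
    have hCI' := (condIndepFun_iff_condExp_inter_preimage_eq_mul hR hX).mp hCI
    have hIndep : IndepFun R X (μ[|Ek]) := by
      rw [indepFun_iff_measure_inter_preimage_eq_mul]
      intro s t hs ht
      have hA : MeasurableSet (R ⁻¹' s) := hR hs
      have hB : MeasurableSet (X ⁻¹' t) := hX ht
      have hAB : MeasurableSet (R ⁻¹' s ∩ X ⁻¹' t) := hA.inter hB
      have e1 : ∫ x in Ek, (μ⟦R ⁻¹' s ∩ X ⁻¹' t | MeasurableSpace.comap Y inferInstance⟧) x ∂μ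
          = ∫ x in Ek, ((μ⟦R ⁻¹' s | MeasurableSpace.comap Y inferInstance⟧) x *
              (μ⟦X ⁻¹' t | MeasurableSpace.comap Y inferInstance⟧) x) ∂μ :=
        setIntegral_congr_ae hEk ((hCI' s t hs ht).mono fun x hx _ => hx)
      have hEq : Set.EqOn
          (fun x => (μ⟦R ⁻¹' s | MeasurableSpace.comap Y inferInstance⟧) x *
            (μ⟦X ⁻¹' t | MeasurableSpace.comap Y inferInstance⟧) x)
          (fun _ => (μ⟦R ⁻¹' s | MeasurableSpace.comap Y inferInstance⟧) ω₁ *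
            (μ⟦X ⁻¹' t | MeasurableSpace.comap Y inferInstance⟧) ω₁) Ek := by
        intro ω hω
        simp only
        rw [hval _ stronglyMeasurable_condExp.measurable hω,
          hval _ stronglyMeasurable_condExp.measurable hω]
      have e2 : (μ (R ⁻¹' s ∩ X ⁻¹' t ∩ Ek)).toReal
          = ((μ⟦R ⁻¹' s | MeasurableSpace.comap Y inferInstance⟧) ω₁ *
              (μ⟦X ⁻¹' t | MeasurableSpace.comap Y inferInstance⟧) ω₁) * T := by
        rw [← hindint _ hAB, e1, setIntegral_congr_fun hEk hEq, setIntegral_const,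
          smul_eq_mul, mul_comm]
        rfl
      have ha := hcondconst _ hA
      have hb := hcondconst _ hB
      have emain : (μ (Ek ∩ (R ⁻¹' s ∩ X ⁻¹' t))).toReal * T
          = (μ (Ek ∩ R ⁻¹' s)).toReal * (μ (Ek ∩ X ⁻¹' t)).toReal := by
        rw [Set.inter_comm Ek, Set.inter_comm Ek, Set.inter_comm Ek, e2, ← ha, ← hb]; ring
      rw [cond_apply hEk, cond_apply hEk, cond_apply hEk]
      have hinv_ne : (μ Ek)⁻¹ ≠ ⊤ := ENNReal.inv_ne_top.mpr hk
      refine (ENNReal.toReal_eq_toReal_iff'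
        (ENNReal.mul_ne_top hinv_ne (measure_ne_top μ _)) ?_).mp ?_
      · exact ENNReal.mul_ne_top
          (ENNReal.mul_ne_top hinv_ne (measure_ne_top μ _))
          (ENNReal.mul_ne_top hinv_ne (measure_ne_top μ _))
      · simp only [ENNReal.toReal_mul, ENNReal.toReal_inv]
        have hT2 : (μ Ek).toReal ≠ 0 := hT
        have emain' : (μ (Ek ∩ (R ⁻¹' s ∩ X ⁻¹' t))).toReal * (μ Ek).toReal
            = (μ (Ek ∩ R ⁻¹' s)).toReal * (μ (Ek ∩ X ⁻¹' t)).toReal := emain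
        field_simp [hT2]
        linear_combination emain'
    -- conversion between conditional and restricted integrals
    have hconv : ∀ f : Ω → ℝ, ∫ ω, f ω ∂(μ[|Ek]) = T⁻¹ * ∫ ω in Ek, f ω ∂μ := by
      intro f
      simp only [ProbabilityTheory.cond]
      rw [integral_smul_measure, ENNReal.toReal_inv, smul_eq_mul, hTdef]
    have hRint : Integrable R μ :=
      (integrable_const (1:ℝ)).mono' hR.aestronglyMeasurable
        (ae_of_all _ fun ω => by simpa [Real.norm_eq_abs] using hRb ω)
    have hRE : ∫ ω in Ek, R ω ∂μ = φ k * T := by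
      rw [← setIntegral_condExp hY.comap_le hRint hEkm]
      calc ∫ x in Ek, (μ[R | MeasurableSpace.comap Y inferInstance]) x ∂μ
          = ∫ x in Ek, φ (Y x) ∂μ := setIntegral_congr_ae hEk (hmech.mono fun x hx _ => hx)
        _ = ∫ _x in Ek, φ k ∂μ :=
            setIntegral_congr_fun hEk (fun ω hω => by rw [show Y ω = k from hω])
        _ = φ k * T := by rw [setIntegral_const, smul_eq_mul, mul_comm]; rfl
    have hmul : ∫ ω, R ω * g (X ω) ∂(μ[|Ek])
        = (∫ ω, R ω ∂(μ[|Ek])) * ∫ ω, g (X ω) ∂(μ[|Ek]) :=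
      (hIndep.comp measurable_id hg).integral_fun_mul_eq_mul_integral hR.aestronglyMeasurable
        ((hg.comp hX).aestronglyMeasurable)
    rw [hconv, hconv, hconv, hRE] at hmul
    have hT' : T⁻¹ * (φ k * T) = φ k := by field_simp
    rw [hT'] at hmul
    field_simp [hT] at hmul
    linear_combination hmul

/-- **Consistency of the plug-in debiased SSL risk estimator.**
Let `(Xᵢ, Yᵢ, Rᵢ)` be i.i.d. copies of `(X, Y, R)` with `Y` in a finite label set,
`R ∈ {0,1}`, `R ⟂ X | Y`, and `E[R|Y] = φ(Y)` a.s. with `c ≤ φ(k) ≤ 1`, `c > 0`.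
For bounded measurable losses `|ℓℓ| ≤ L`, `|ℓu| ≤ L`, any `λ ∈ ℝ`, and any estimators
`φ̂ⁿ ≥ c` converging in probability to `φ(k)` for each class `k`, the plug-in debiased SSL
empirical risk `n⁻¹ ∑ᵢ [Rᵢ ℓℓ(Xᵢ,Yᵢ)/φ̂ⁿ(Yᵢ) − λ (Rᵢ − φ̂ⁿ(Yᵢ)) ℓu(Xᵢ)/φ̂ⁿ(Yᵢ)]`
converges in probability to `E[ℓℓ(X,Y)]`. -/
theorem plugin_debiased_ssl_risk_consistent
    {Ω : Type*} [MeasurableSpace Ω] [StandardBorelSpace Ω]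
    {𝒳 : Type*} [MeasurableSpace 𝒳]
    {C : Type*} [Fintype C] [MeasurableSpace C] [MeasurableSingletonClass C]
    (μ : Measure Ω) [IsProbabilityMeasure μ]
    (Xs : ℕ → Ω → 𝒳) (Ys : ℕ → Ω → C) (Rs : ℕ → Ω → ℝ)
    (hmeas : ∀ i, Measurable fun ω => (Xs i ω, Ys i ω, Rs i ω))
    (hY0 : Measurable (Ys 0))
    (hindep : iIndepFun
      (fun i ω => (Xs i ω, Ys i ω, Rs i ω)) μ)
    (hident : ∀ i, IdentDistrib (fun ω => (Xs i ω, Ys i ω, Rs i ω))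
      (fun ω => (Xs 0 ω, Ys 0 ω, Rs 0 ω)) μ μ)
    (hR01 : ∀ i ω, Rs i ω = 0 ∨ Rs i ω = 1)
    (hCI : CondIndepFun (MeasurableSpace.comap (Ys 0) inferInstance) hY0.comap_le
      (Rs 0) (Xs 0) μ)
    (φ : C → ℝ) (c : ℝ) (hc : 0 < c)
    (hφ_lb : ∀ k, c ≤ φ k) (hφ_ub : ∀ k, φ k ≤ 1)
    (hmech : μ[Rs 0 | MeasurableSpace.comap (Ys 0) inferInstance]
      =ᵐ[μ] fun ω => φ (Ys 0 ω))
    (ℓℓ : 𝒳 → C → ℝ) (hℓℓ : Measurable fun p : 𝒳 × C => ℓℓ p.1 p.2)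
    (ℓu : 𝒳 → ℝ) (hℓu : Measurable ℓu)
    (L : ℝ) (hLℓ : ∀ x k, |ℓℓ x k| ≤ L) (hLu : ∀ x, |ℓu x| ≤ L)
    (lam : ℝ)
    (phihat : ℕ → C → Ω → ℝ)
    (hphihat_meas : ∀ n k, Measurable (phihat n k))
    (hphihat_lb : ∀ n k ω, c ≤ phihat n k ω)
    (hphihat_tendsto : ∀ k : C,
      TendstoInMeasure μ (fun n => phihat n k) atTop (fun _ => φ k)) :
    TendstoInMeasure μ
      (fun (n : ℕ) ω => (1 / (n : ℝ)) *
        ∑ i ∈ Finset.range n,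
          (Rs i ω * ℓℓ (Xs i ω) (Ys i ω) / phihat n (Ys i ω) ω
            - lam * (Rs i ω - phihat n (Ys i ω) ω) * ℓu (Xs i ω)
                / phihat n (Ys i ω) ω))
      atTop
      (fun _ => ∫ ω, ℓℓ (Xs 0 ω) (Ys 0 ω) ∂μ) := by
  classical
  have hXm : ∀ i, Measurable (Xs i) := fun i => measurable_fst.comp (hmeas i)
  have hYm : ∀ i, Measurable (Ys i) := fun i =>
    measurable_fst.comp (measurable_snd.comp (hmeas i))
  have hRm : ∀ i, Measurable (Rs i) := fun i =>
    measurable_snd.comp (measurable_snd.comp (hmeas i))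
  have hφm : Measurable φ := measurable_of_finite φ
  obtain ⟨ω₀, -⟩ : (Set.univ : Set Ω).Nonempty :=
    nonempty_of_measure_ne_zero (by simp : μ (Set.univ : Set Ω) ≠ 0)
  have hL0 : 0 ≤ L := (abs_nonneg _).trans (hLℓ (Xs 0 ω₀) (Ys 0 ω₀))
  have hφpos : ∀ k, 0 < φ k := fun k => lt_of_lt_of_le hc (hφ_lb k)
  have hRb : ∀ i ω, |Rs i ω| ≤ 1 := by
    intro i ω; rcases hR01 i ω with h | h <;> simp [h]
  have intbdd : ∀ (f : Ω → ℝ) (M : ℝ), Measurable f → (∀ ω, |f ω| ≤ M) → Integrable f μ :=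
    fun f M hf hb => (integrable_const M).mono' hf.aestronglyMeasurable
      (ae_of_all _ fun ω => by simpa [Real.norm_eq_abs] using hb ω)
  -- the oracle summands
  set Z : ℕ → Ω → ℝ := fun i ω =>
    Rs i ω * ℓℓ (Xs i ω) (Ys i ω) / φ (Ys i ω)
      - lam * (Rs i ω - φ (Ys i ω)) * ℓu (Xs i ω) / φ (Ys i ω) with hZdef
  set F : 𝒳 × C × ℝ → ℝ := fun p =>
    p.2.2 * ℓℓ p.1 p.2.1 / φ p.2.1 - lam * (p.2.2 - φ p.2.1) * ℓu p.1 / φ p.2.1 with hFdef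
  have hFm : Measurable F := by
    apply Measurable.sub
    · exact (measurable_snd.snd.mul
        (hℓℓ.comp (measurable_fst.prodMk measurable_snd.fst))).div
        (hφm.comp measurable_snd.fst)
    · exact ((measurable_const.mul
        (measurable_snd.snd.sub (hφm.comp measurable_snd.fst))).mul
        (hℓu.comp measurable_fst)).div (hφm.comp measurable_snd.fst)
  have hZm : ∀ i, Measurable (Z i) := fun i => hFm.comp (hmeas i)
  -- pointwise bound
  have hbd : ∀ (r p a b : ℝ), |r| ≤ 1 → c ≤ p → p ≤ 1 → |a| ≤ L → |b| ≤ L →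
      |r * a / p - lam * (r - p) * b / p| ≤ (L + |lam| * (2 * L)) / c := by
    intro r p a b hr hp hp1 ha hb
    have hp0 : 0 < p := lt_of_lt_of_le hc hp
    have h1 : |r * a / p| ≤ L / c := by
      rw [abs_div, abs_of_pos hp0]
      refine div_le_div₀ hL0 ?_ hc hp
      calc |r * a| = |r| * |a| := abs_mul _ _
        _ ≤ 1 * L := mul_le_mul hr ha (abs_nonneg _) zero_le_one
        _ = L := one_mul L
    have h2 : |lam * (r - p) * b / p| ≤ |lam| * (2 * L) / c := by
      rw [abs_div, abs_of_pos hp0]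
      refine div_le_div₀ (by positivity) ?_ hc hp
      have hrp : |r - p| ≤ 2 := by
        have h3 : |r - p| ≤ |r| + |p| := abs_sub r p
        have h4 : |p| = p := abs_of_pos hp0
        linarith
      calc |lam * (r - p) * b| = |lam| * |r - p| * |b| := by rw [abs_mul, abs_mul]
        _ ≤ |lam| * 2 * L := by
            have h5 : |r - p| * |b| ≤ 2 * L :=
              mul_le_mul hrp hb (abs_nonneg _) (by norm_num)
            calc |lam| * |r - p| * |b| = |lam| * (|r - p| * |b|) := by ring
              _ ≤ |lam| * (2 * L) := mul_le_mul_of_nonneg_left h5 (abs_nonneg lam)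
              _ = |lam| * 2 * L := by ring
        _ = |lam| * (2 * L) := by ring
    calc |r * a / p - lam * (r - p) * b / p|
        ≤ |r * a / p| + |lam * (r - p) * b / p| := abs_sub _ _
      _ ≤ L / c + |lam| * (2 * L) / c := add_le_add h1 h2
      _ = (L + |lam| * (2 * L)) / c := by ring
  set B : ℝ := (L + |lam| * (2 * L)) / c with hBdef
  have hZb : ∀ i ω, |Z i ω| ≤ B := fun i ω =>
    hbd _ _ _ _ (hRb i ω) (hφ_lb _) (hφ_ub _) (hLℓ _ _) (hLu _)
  have hZint : Integrable (Z 0) μ := intbdd _ B (hZm 0) (hZb 0)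
  -- the expected value of the oracle summand
  have key := fun (k : C) (g : 𝒳 → ℝ) (hg : Measurable g) =>
    key_identity μ (Xs 0) (Ys 0) (Rs 0) (hXm 0) hY0 (hRm 0) (hRb 0) hCI φ hmech k g hg
  have hsplit : ∀ f : Ω → ℝ, Integrable f μ →
      ∫ ω, f ω ∂μ = ∑ k : C, ∫ ω in Ys 0 ⁻¹' {k}, f ω ∂μ := by
    intro f hf
    have hpt : ∀ ω, f ω = ∑ k : C, (Ys 0 ⁻¹' {k}).indicator f ω := by
      intro ω
      rw [Finset.sum_eq_single (Ys 0 ω)]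
      · rw [Set.indicator_of_mem (show ω ∈ Ys 0 ⁻¹' {Ys 0 ω} from rfl)]
      · intro k _ hk
        apply Set.indicator_of_notMem
        intro h
        have hh : Ys 0 ω = k := h
        exact hk hh.symm
      · intro h; exact absurd (Finset.mem_univ _) h
    calc ∫ ω, f ω ∂μ = ∫ ω, ∑ k : C, (Ys 0 ⁻¹' {k}).indicator f ω ∂μ :=
          integral_congr_ae (ae_of_all _ hpt)
      _ = ∑ k : C, ∫ ω, (Ys 0 ⁻¹' {k}).indicator f ω ∂μ :=
          integral_finset_sum _ (fun k _ => hf.indicator (hY0 (measurableSet_singleton k)))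
      _ = ∑ k : C, ∫ ω in Ys 0 ⁻¹' {k}, f ω ∂μ :=
          Finset.sum_congr rfl fun k _ => integral_indicator (hY0 (measurableSet_singleton k))
  have hℓℓint : Integrable (fun ω => ℓℓ (Xs 0 ω) (Ys 0 ω)) μ :=
    intbdd _ L (hℓℓ.comp ((hXm 0).prodMk hY0)) (fun ω => hLℓ _ _)
  have hperk : ∀ k : C, ∫ ω in Ys 0 ⁻¹' {k}, Z 0 ω ∂μ
      = ∫ ω in Ys 0 ⁻¹' {k}, ℓℓ (Xs 0 ω) (Ys 0 ω) ∂μ := by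
    intro k
    have hEk : MeasurableSet (Ys 0 ⁻¹' {k}) := hY0 (measurableSet_singleton k)
    have hφk : φ k ≠ 0 := ne_of_gt (hφpos k)
    have i1 : IntegrableOn (fun ω => Rs 0 ω * ℓℓ (Xs 0 ω) k) (Ys 0 ⁻¹' {k}) μ := by
      refine (intbdd _ L ((hRm 0).mul ((hℓℓ.comp ((hXm 0).prodMk measurable_const)))) ?_).integrableOn
      intro ω
      calc |Rs 0 ω * ℓℓ (Xs 0 ω) k| = |Rs 0 ω| * |ℓℓ (Xs 0 ω) k| := abs_mul _ _
        _ ≤ 1 * L := mul_le_mul (hRb 0 ω) (hLℓ _ _) (abs_nonneg _) zero_le_one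
        _ = L := one_mul L
    have i2 : IntegrableOn (fun ω => Rs 0 ω * ℓu (Xs 0 ω)) (Ys 0 ⁻¹' {k}) μ := by
      refine (intbdd _ L ((hRm 0).mul (hℓu.comp (hXm 0))) ?_).integrableOn
      intro ω
      calc |Rs 0 ω * ℓu (Xs 0 ω)| = |Rs 0 ω| * |ℓu (Xs 0 ω)| := abs_mul _ _
        _ ≤ 1 * L := mul_le_mul (hRb 0 ω) (hLu _) (abs_nonneg _) zero_le_one
        _ = L := one_mul L
    have i3 : IntegrableOn (fun ω => ℓu (Xs 0 ω)) (Ys 0 ⁻¹' {k}) μ :=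
      (intbdd _ L (hℓu.comp (hXm 0)) (fun ω => hLu _)).integrableOn
    have step1 : ∫ ω in Ys 0 ⁻¹' {k}, Z 0 ω ∂μ
        = ∫ ω in Ys 0 ⁻¹' {k},
            ((φ k)⁻¹ * (Rs 0 ω * ℓℓ (Xs 0 ω) k)
              - ((lam * (φ k)⁻¹) * (Rs 0 ω * ℓu (Xs 0 ω)) - lam * ℓu (Xs 0 ω))) ∂μ := by
      refine setIntegral_congr_fun hEk fun ω hω => ?_
      have hYω : Ys 0 ω = k := hω
      simp only [hZdef, hYω]
      field_simp
    have i1' : Integrable (fun ω => (φ k)⁻¹ * (Rs 0 ω * ℓℓ (Xs 0 ω) k))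
        (μ.restrict (Ys 0 ⁻¹' {k})) := i1.const_mul _
    have i2' : Integrable (fun ω => lam * (φ k)⁻¹ * (Rs 0 ω * ℓu (Xs 0 ω)))
        (μ.restrict (Ys 0 ⁻¹' {k})) := i2.const_mul _
    have i3' : Integrable (fun ω => lam * ℓu (Xs 0 ω))
        (μ.restrict (Ys 0 ⁻¹' {k})) := i3.const_mul _
    have i23 : Integrable (fun ω => lam * (φ k)⁻¹ * (Rs 0 ω * ℓu (Xs 0 ω)) - lam * ℓu (Xs 0 ω))
        (μ.restrict (Ys 0 ⁻¹' {k})) := i2'.sub i3'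
    rw [step1, integral_sub i1' i23,
      integral_sub i2' i3',
      integral_const_mul, integral_const_mul, integral_const_mul,
      key k (fun x => ℓℓ x k) (hℓℓ.comp (measurable_id.prodMk measurable_const)),
      key k ℓu hℓu,
      setIntegral_congr_fun hEk
        (show Set.EqOn (fun ω => ℓℓ (Xs 0 ω) (Ys 0 ω)) (fun ω => ℓℓ (Xs 0 ω) k) _ from
          fun ω hω => by
            show ℓℓ (Xs 0 ω) (Ys 0 ω) = ℓℓ (Xs 0 ω) k
            rw [show Ys 0 ω = k from hω])]
    field_simp
    ring
  have hEZ : ∫ ω, Z 0 ω ∂μ = ∫ ω, ℓℓ (Xs 0 ω) (Ys 0 ω) ∂μ := by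
    rw [hsplit _ hZint, hsplit _ hℓℓint]
    exact Finset.sum_congr rfl fun k _ => hperk k
  -- strong law of large numbers for the oracle estimator
  have hpair : Pairwise (Function.onFun (IndepFun · · μ) Z) := by
    intro i j hij
    have := (hindep.indepFun hij).comp hFm hFm
    exact this
  have hid : ∀ i, IdentDistrib (Z i) (Z 0) μ μ := fun i => (hident i).comp hFm
  have hlln := strong_law_ae_real Z hZint hpair hid
  have hS : TendstoInMeasure μ (fun n ω => (∑ i ∈ Finset.range n, Z i ω) / (n : ℝ)) atTop
      (fun _ => ∫ ω, ℓℓ (Xs 0 ω) (Ys 0 ω) ∂μ) := by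
    refine tendstoInMeasure_of_tendsto_ae (fun n => ?_) ?_
    · exact ((Finset.measurable_sum _ (fun i _ => hZm i)).div_const _).aestronglyMeasurable
    · filter_upwards [hlln] with ω hω
      rw [← hEZ]
      exact hω
  -- the perturbation term
  set K0 : ℝ := (L + |lam| * L) / (c * c) with hK0def
  have hK0 : 0 ≤ K0 := by positivity
  have hinv : ∀ p q : ℝ, c ≤ p → c ≤ q → |1/p - 1/q| ≤ |p - q| / (c * c) := by
    intro p q hp hq
    have hp0 : 0 < p := lt_of_lt_of_le hc hp
    have hq0 : 0 < q := lt_of_lt_of_le hc hq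
    have heq : 1/p - 1/q = (q - p) / (p * q) := by field_simp
    rw [heq, abs_div, abs_of_pos (mul_pos hp0 hq0), abs_sub_comm]
    exact div_le_div₀ (abs_nonneg _) le_rfl (mul_pos hc hc)
      (mul_le_mul hp hq hc.le hp0.le)
  have hdiff : ∀ n i ω,
      (Rs i ω * ℓℓ (Xs i ω) (Ys i ω) / phihat n (Ys i ω) ω
        - lam * (Rs i ω - phihat n (Ys i ω) ω) * ℓu (Xs i ω) / phihat n (Ys i ω) ω)
        - Z i ω
      = Rs i ω * (ℓℓ (Xs i ω) (Ys i ω) - lam * ℓu (Xs i ω))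
          * (1 / phihat n (Ys i ω) ω - 1 / φ (Ys i ω)) := by
    intro n i ω
    have h1 : phihat n (Ys i ω) ω ≠ 0 :=
      ne_of_gt (lt_of_lt_of_le hc (hphihat_lb n _ ω))
    have h2 : φ (Ys i ω) ≠ 0 := ne_of_gt (hφpos _)
    simp only [hZdef]
    field_simp
    ring
  have hdiffb : ∀ n i ω,
      |Rs i ω * (ℓℓ (Xs i ω) (Ys i ω) - lam * ℓu (Xs i ω))
        * (1 / phihat n (Ys i ω) ω - 1 / φ (Ys i ω))|
      ≤ K0 * ∑ k : C, |phihat n k ω - φ k| := by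
    intro n i ω
    have hA : |ℓℓ (Xs i ω) (Ys i ω) - lam * ℓu (Xs i ω)| ≤ L + |lam| * L := by
      calc |ℓℓ (Xs i ω) (Ys i ω) - lam * ℓu (Xs i ω)|
          ≤ |ℓℓ (Xs i ω) (Ys i ω)| + |lam * ℓu (Xs i ω)| := abs_sub _ _
        _ ≤ L + |lam| * L := by
            refine add_le_add (hLℓ _ _) ?_
            rw [abs_mul]
            exact mul_le_mul_of_nonneg_left (hLu _) (abs_nonneg lam)
    have hI : |1 / phihat n (Ys i ω) ω - 1 / φ (Ys i ω)|
        ≤ (∑ k : C, |phihat n k ω - φ k|) / (c * c) := by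
      refine (hinv _ _ (hphihat_lb n _ ω) (hφ_lb _)).trans ?_
      gcongr
      exact Finset.single_le_sum (f := fun k => |phihat n k ω - φ k|)
        (fun k _ => abs_nonneg _) (Finset.mem_univ _)
    have h6 : |ℓℓ (Xs i ω) (Ys i ω) - lam * ℓu (Xs i ω)|
        * |1 / phihat n (Ys i ω) ω - 1 / φ (Ys i ω)|
        ≤ (L + |lam| * L) * ((∑ k : C, |phihat n k ω - φ k|) / (c * c)) :=
      mul_le_mul hA hI (abs_nonneg _) (by positivity)
    calc |Rs i ω * (ℓℓ (Xs i ω) (Ys i ω) - lam * ℓu (Xs i ω))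
        * (1 / phihat n (Ys i ω) ω - 1 / φ (Ys i ω))|
        = |Rs i ω| * (|ℓℓ (Xs i ω) (Ys i ω) - lam * ℓu (Xs i ω)|
            * |1 / phihat n (Ys i ω) ω - 1 / φ (Ys i ω)|) := by
          rw [abs_mul, abs_mul]; ring
      _ ≤ 1 * ((L + |lam| * L) * ((∑ k : C, |phihat n k ω - φ k|) / (c * c))) :=
          mul_le_mul (hRb i ω) h6 (by positivity) zero_le_one
      _ = K0 * ∑ k : C, |phihat n k ω - φ k| := by rw [hK0def]; ring
  -- total perturbation bound
  have hDb : ∀ (n : ℕ) (ω : Ω),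
      |(1 / (n : ℝ)) * ∑ i ∈ Finset.range n,
          (Rs i ω * ℓℓ (Xs i ω) (Ys i ω) / phihat n (Ys i ω) ω
            - lam * (Rs i ω - phihat n (Ys i ω) ω) * ℓu (Xs i ω)
                / phihat n (Ys i ω) ω)
        - (∑ i ∈ Finset.range n, Z i ω) / (n : ℝ)|
      ≤ K0 * ∑ k : C, |phihat n k ω - φ k| := by
    intro n ω
    have hS0 : 0 ≤ ∑ k : C, |phihat n k ω - φ k| :=
      Finset.sum_nonneg fun k _ => abs_nonneg _
    rcases Nat.eq_zero_or_pos n with rfl | hn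
    · simp only [Finset.range_zero, Finset.sum_empty, mul_zero, Nat.cast_zero, div_zero,
        sub_zero, abs_zero]
      positivity
    · have hn0 : (n : ℝ) ≠ 0 := Nat.cast_ne_zero.mpr hn.ne'
      have heq : (1 / (n : ℝ)) * ∑ i ∈ Finset.range n,
            (Rs i ω * ℓℓ (Xs i ω) (Ys i ω) / phihat n (Ys i ω) ω
              - lam * (Rs i ω - phihat n (Ys i ω) ω) * ℓu (Xs i ω)
                  / phihat n (Ys i ω) ω)
          - (∑ i ∈ Finset.range n, Z i ω) / (n : ℝ)
          = (1 / (n : ℝ)) * ∑ i ∈ Finset.range n,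
              ((Rs i ω * ℓℓ (Xs i ω) (Ys i ω) / phihat n (Ys i ω) ω
                - lam * (Rs i ω - phihat n (Ys i ω) ω) * ℓu (Xs i ω)
                    / phihat n (Ys i ω) ω) - Z i ω) := by
        conv_rhs => rw [Finset.sum_sub_distrib]
        ring
      rw [heq]
      have hn1 : 0 < 1 / (n : ℝ) := by positivity
      calc |(1 / (n : ℝ)) * ∑ i ∈ Finset.range n, _|
          = (1 / (n : ℝ)) * |∑ i ∈ Finset.range n,
              ((Rs i ω * ℓℓ (Xs i ω) (Ys i ω) / phihat n (Ys i ω) ω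
                - lam * (Rs i ω - phihat n (Ys i ω) ω) * ℓu (Xs i ω)
                    / phihat n (Ys i ω) ω) - Z i ω)| := by
            rw [abs_mul, abs_of_pos hn1]
        _ ≤ (1 / (n : ℝ)) * ∑ i ∈ Finset.range n,
              |(Rs i ω * ℓℓ (Xs i ω) (Ys i ω) / phihat n (Ys i ω) ω
                - lam * (Rs i ω - phihat n (Ys i ω) ω) * ℓu (Xs i ω)
                    / phihat n (Ys i ω) ω) - Z i ω| :=
            mul_le_mul_of_nonneg_left (Finset.abs_sum_le_sum_abs _ _) hn1.le
        _ ≤ (1 / (n : ℝ)) * ∑ _i ∈ Finset.range n,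
              (K0 * ∑ k : C, |phihat n k ω - φ k|) := by
            refine mul_le_mul_of_nonneg_left (Finset.sum_le_sum fun i _ => ?_) hn1.le
            rw [hdiff n i ω]
            exact hdiffb n i ω
        _ = (1 / (n : ℝ)) * ((n : ℝ) * (K0 * ∑ k : C, |phihat n k ω - φ k|)) := by
            rw [Finset.sum_const, Finset.card_range, nsmul_eq_mul]
        _ = K0 * ∑ k : C, |phihat n k ω - φ k| := by field_simp
  have hD : TendstoInMeasure μ
      (fun (n : ℕ) (ω : Ω) => (1 / (n : ℝ)) * ∑ i ∈ Finset.range n,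
          (Rs i ω * ℓℓ (Xs i ω) (Ys i ω) / phihat n (Ys i ω) ω
            - lam * (Rs i ω - phihat n (Ys i ω) ω) * ℓu (Xs i ω)
                / phihat n (Ys i ω) ω)
        - (∑ i ∈ Finset.range n, Z i ω) / (n : ℝ)) atTop (fun _ => (0:ℝ)) :=
    tim_zero_of_bound _ phihat φ K0 hK0 hDb hphihat_tendsto
  have hfinal := tim_add_zero hS hD
  exact TendstoInMeasure.congr (fun n => ae_of_all _ fun ω => by ring)
    (ae_of_all _ fun ω => rfl) hfinal
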